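/- Predictive OMD regret bound: let φ : D → ℝ≥0 be differentiable and 1-strongly convex w.r.t. ‖·‖ on the closed convex set D ⊆ ℝⁿ, η > 0, and z⁰ ∈ D. Define xᵗ = argmin_{x∈D} ⟨mᵗ, x⟩ + (1/η)D(x‖zᵗ⁻¹) and zᵗ = argmin_{z∈D} ⟨ℓᵗ, z⟩ + (1/η)D(z‖zᵗ⁻¹), where D(·‖·) is the Bregman divergence of φ. Then for all x̂ ∈ D and T: Σₜ₌₁ᵀ ⟨ℓᵗ, xᵗ − x̂⟩ ≤ D(x̂‖z⁰)/η + η Σₜ₌₁ᵀ ‖ℓᵗ − mᵗ‖*² − (1/(8η)) Σₜ₌₁^{T−1} ‖xᵗ⁺¹ − xᵗ‖². -/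

import Mathlib

open scoped InnerProductSpace BigOperators

lemma aux_deriv_nonneg {ψ : ℝ → ℝ} {d : ℝ} (h : HasDerivAt ψ d 0)
    (hmin : ∀ s ∈ Set.Ioc (0:ℝ) 1, ψ 0 ≤ ψ s) : 0 ≤ d := by
  have ht : Filter.Tendsto (slope ψ 0) (nhdsWithin 0 (Set.Ioi 0)) (nhds d) :=
    (hasDerivAt_iff_tendsto_slope.mp h).mono_left
      (nhdsWithin_mono _ (fun s hs => ne_of_gt hs))
  refine ge_of_tendsto ht ?_
  filter_upwards [Ioc_mem_nhdsGT_of_mem (Set.left_mem_Ico.2 one_pos)] with s hs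
  rw [slope_def_field]
  have : (0:ℝ) ≤ (ψ s - ψ 0) := sub_nonneg.2 (hmin s hs)
  have hs0 : (0:ℝ) < s - 0 := by simpa using hs.1
  exact div_nonneg this hs0.le

lemma aux_opt {n : ℕ} {D : Set (EuclideanSpace ℝ (Fin n))} (hDconv : Convex ℝ D)
    {φ : EuclideanSpace ℝ (Fin n) → ℝ} {v c g gc xs u : EuclideanSpace ℝ (Fin n)}
    (hg : HasGradientAt φ g xs) {η : ℝ} (hη : 0 < η)
    (hmin : IsMinOn (fun y => ⟪v, y⟫_ℝ + 1 / η * (φ y - φ c - ⟪gc, y - c⟫_ℝ)) D xs)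
    (hxs : xs ∈ D) (hu : u ∈ D) :
    0 ≤ ⟪v, u - xs⟫_ℝ + 1 / η * ⟪g - gc, u - xs⟫_ℝ := by
  set w := u - xs with hw
  have hL : HasDerivAt (fun s : ℝ => xs + s • w) w 0 := by
    simpa using ((hasDerivAt_id (0:ℝ)).smul_const w).const_add xs
  have hφψ : HasDerivAt (fun s : ℝ => φ (xs + s • w)) ⟪g, w⟫_ℝ 0 := by
    have h0 : xs + (0:ℝ) • w = xs := by simp
    have := (h0 ▸ hg.hasFDerivAt : HasFDerivAt φ _ (xs + (0:ℝ) • w)).comp_hasDerivAt 0 hL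
    simp at this; exact this
  have hlin1 : HasDerivAt (fun s : ℝ => ⟪v, xs + s • w⟫_ℝ) ⟪v, w⟫_ℝ 0 := by
    have he : (fun s : ℝ => ⟪v, xs + s • w⟫_ℝ) = fun s => ⟪v, xs⟫_ℝ + s * ⟪v, w⟫_ℝ := by
      funext s; rw [inner_add_right, real_inner_smul_right]
    rw [he]; simpa using ((hasDerivAt_id (0:ℝ)).mul_const ⟪v, w⟫_ℝ).const_add ⟪v, xs⟫_ℝ
  have hlin2 : HasDerivAt (fun s : ℝ => ⟪gc, xs + s • w - c⟫_ℝ) ⟪gc, w⟫_ℝ 0 := by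
    have he : (fun s : ℝ => ⟪gc, xs + s • w - c⟫_ℝ) = fun s => ⟪gc, xs - c⟫_ℝ + s * ⟪gc, w⟫_ℝ := by
      funext s
      rw [show xs + s • w - c = (xs - c) + s • w by abel, inner_add_right, real_inner_smul_right]
    rw [he]; simpa using ((hasDerivAt_id (0:ℝ)).mul_const ⟪gc, w⟫_ℝ).const_add ⟪gc, xs - c⟫_ℝ
  have hψ : HasDerivAt
      (fun s : ℝ => ⟪v, xs + s • w⟫_ℝ + 1 / η * (φ (xs + s • w) - φ c - ⟪gc, xs + s • w - c⟫_ℝ))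
      (⟪v, w⟫_ℝ + 1 / η * (⟪g, w⟫_ℝ - ⟪gc, w⟫_ℝ)) 0 :=
    hlin1.add (((hφψ.sub_const (φ c)).sub hlin2).const_mul (1 / η))
  have key : 0 ≤ ⟪v, w⟫_ℝ + 1 / η * (⟪g, w⟫_ℝ - ⟪gc, w⟫_ℝ) := by
    apply aux_deriv_nonneg hψ
    intro s hs
    have hmem : xs + s • w ∈ D := by
      have h2 : (1 - s) • xs + s • u ∈ D :=
        hDconv hxs hu (by linarith [hs.2]) hs.1.le (by ring)
      have h3 : xs + s • w = (1 - s) • xs + s • u := by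
        rw [hw, smul_sub, sub_smul, one_smul]; abel
      rw [h3]; exact h2
    have := isMinOn_iff.mp hmin _ hmem
    simpa using this
  rw [inner_sub_left]
  exact key

lemma aux_dual {n : ℕ} (N Nd : EuclideanSpace ℝ (Fin n) → ℝ)
    (hNadd : ∀ x y, N (x + y) ≤ N x + N y)
    (hNsmul : ∀ (c : ℝ) (x), N (c • x) = |c| * N x)
    (hNpos : ∀ x, x ≠ 0 → 0 < N x)
    (hNd : ∀ a, Nd a = sSup {r : ℝ | ∃ x, N x ≤ 1 ∧ r = ⟪a, x⟫_ℝ}) :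
    ∀ a w, ⟪a, w⟫_ℝ ≤ Nd a * N w := by
  have hN0 : N 0 = 0 := by simpa using hNsmul 0 0
  -- upper bound : N v ≤ C * ‖v‖
  set C : ℝ := ∑ i : Fin n, N (EuclideanSpace.single i (1:ℝ)) with hCdef
  have hup : ∀ v, N v ≤ C * ‖v‖ := by
    intro v
    have hdecomp : v = ∑ i : Fin n, v i • EuclideanSpace.single i (1:ℝ) := by
      ext j
      rw [show (∑ i : Fin n, v i • EuclideanSpace.single i (1:ℝ)) j
            = ∑ i : Fin n, (v i • EuclideanSpace.single i (1:ℝ)) j from by rw [WithLp.ofLp_sum, Finset.sum_apply]]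
      simp [EuclideanSpace.single_apply]
    calc N v = N (∑ i : Fin n, v i • EuclideanSpace.single i (1:ℝ)) := by rw [← hdecomp]
      _ ≤ ∑ i : Fin n, N (v i • EuclideanSpace.single i (1:ℝ)) :=
          Finset.le_sum_of_subadditive N hN0.le hNadd _ _
      _ = ∑ i : Fin n, |v i| * N (EuclideanSpace.single i (1:ℝ)) := by
          simp [hNsmul]
      _ ≤ ∑ i : Fin n, ‖v‖ * N (EuclideanSpace.single i (1:ℝ)) := by
          apply Finset.sum_le_sum
          intro i _
          have h1 : |v i| ≤ ‖v‖ := by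
            have := abs_real_inner_le_norm (EuclideanSpace.single i (1:ℝ)) v
            simpa [EuclideanSpace.inner_single_left, EuclideanSpace.norm_single] using this
          have h2 : 0 ≤ N (EuclideanSpace.single i (1:ℝ)) := by
            rcases eq_or_ne (EuclideanSpace.single i (1:ℝ)) 0 with h | h
            · rw [h, hN0]
            · exact (hNpos _ h).le
          exact mul_le_mul_of_nonneg_right h1 h2
      _ = C * ‖v‖ := by rw [← Finset.mul_sum, mul_comm]
  -- lower bound : c * ‖v‖ ≤ N v with c > 0
  obtain ⟨c, hc, hlow⟩ : ∃ c : ℝ, 0 < c ∧ ∀ v, c * ‖v‖ ≤ N v := by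
    rcases Nat.eq_zero_or_pos n with hn | hn
    · refine ⟨1, one_pos, fun v => ?_⟩
      have hv : v = 0 := by
        subst hn
        exact Subsingleton.elim v 0
      rw [hv, hN0]; simp
    · -- N is continuous
      have hcont : Continuous N := by
        rw [Metric.continuous_iff]
        intro b ε hε
        rcases le_or_gt C 0 with hC | hC
        · refine ⟨1, one_pos, fun a _ => ?_⟩
          have h1 : N (a - b) ≤ C * ‖a - b‖ := hup _
          have h2 : N (b - a) ≤ C * ‖b - a‖ := hup _
          have h3 : N a ≤ N (a - b) + N b := by
            have := hNadd (a - b) b; simpa using this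
          have h4 : N b ≤ N (b - a) + N a := by
            have := hNadd (b - a) a; simpa using this
          have h5 : 0 ≤ N (a - b) := by
            rcases eq_or_ne (a - b) 0 with h | h
            · rw [h, hN0]
            · exact (hNpos _ h).le
          have h6 : 0 ≤ N (b - a) := by
            rcases eq_or_ne (b - a) 0 with h | h
            · rw [h, hN0]
            · exact (hNpos _ h).le
          have h7 : C * ‖a - b‖ ≤ 0 := mul_nonpos_of_nonpos_of_nonneg hC (norm_nonneg _)
          have h8 : C * ‖b - a‖ ≤ 0 := mul_nonpos_of_nonpos_of_nonneg hC (norm_nonneg _)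
          have : N a = N b := by nlinarith
          rw [Real.dist_eq, this]; simpa using hε
        · refine ⟨ε / C, div_pos hε hC, fun a hab => ?_⟩
          have h1 : N (a - b) ≤ C * ‖a - b‖ := hup _
          have h2 : N (b - a) ≤ C * ‖b - a‖ := hup _
          have h3 : N a ≤ N (a - b) + N b := by
            have := hNadd (a - b) b; simpa using this
          have h4 : N b ≤ N (b - a) + N a := by
            have := hNadd (b - a) a; simpa using this
          have h9 : ‖a - b‖ < ε / C := by rwa [← dist_eq_norm]
          have h10 : ‖b - a‖ < ε / C := by rwa [norm_sub_rev]
          have h11 : C * ‖a - b‖ < ε := by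
            rw [mul_comm]; exact (lt_div_iff₀ hC).mp h9
          have h12 : C * ‖b - a‖ < ε := by
            rw [mul_comm]; exact (lt_div_iff₀ hC).mp h10
          rw [Real.dist_eq, abs_lt]
          constructor <;> nlinarith
      have hsne : (Metric.sphere (0 : EuclideanSpace ℝ (Fin n)) 1).Nonempty := by
        refine ⟨EuclideanSpace.single ⟨0, hn⟩ (1:ℝ), ?_⟩
        simp [EuclideanSpace.norm_single]
      obtain ⟨x₀, hx₀s, hx₀min'⟩ :=
        (isCompact_sphere (0 : EuclideanSpace ℝ (Fin n)) 1).exists_isMinOn hsne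
          hcont.continuousOn
      have hx₀min := isMinOn_iff.mp hx₀min'
      have hx₀norm : ‖x₀‖ = 1 := by simpa using hx₀s
      have hx₀ne : x₀ ≠ 0 := by
        intro h; rw [h] at hx₀norm; simp at hx₀norm
      refine ⟨N x₀, hNpos _ hx₀ne, fun v => ?_⟩
      rcases eq_or_ne v 0 with hv | hv
      · rw [hv, hN0]; simp
      · have hvn : (0:ℝ) < ‖v‖ := norm_pos_iff.mpr hv
        set u := ‖v‖⁻¹ • v with hu
        have hus : u ∈ Metric.sphere (0 : EuclideanSpace ℝ (Fin n)) 1 := by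
          simp [hu, norm_smul, abs_of_pos (inv_pos.mpr hvn), inv_mul_cancel₀ hvn.ne']
        have h1 : N x₀ ≤ N u := hx₀min u hus
        have h2 : N v = ‖v‖ * N u := by
          rw [hu, hNsmul, abs_of_pos (inv_pos.mpr hvn)]
          field_simp
        nlinarith
  -- bddAbove
  have hbdd : ∀ a, BddAbove {r : ℝ | ∃ x, N x ≤ 1 ∧ r = ⟪a, x⟫_ℝ} := by
    intro a
    refine ⟨‖a‖ * c⁻¹, ?_⟩
    rintro r ⟨y, hy, rfl⟩
    have h1 : ⟪a, y⟫_ℝ ≤ ‖a‖ * ‖y‖ := real_inner_le_norm a y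
    have h2 : c * ‖y‖ ≤ N y := hlow y
    have h3 : ‖y‖ ≤ c⁻¹ := by
      rw [← one_div, le_div_iff₀ hc]
      nlinarith [norm_nonneg y]
    calc ⟪a, y⟫_ℝ ≤ ‖a‖ * ‖y‖ := h1
      _ ≤ ‖a‖ * c⁻¹ := mul_le_mul_of_nonneg_left h3 (norm_nonneg a)
  intro a w
  rcases eq_or_ne w 0 with hw | hw
  · rw [hw, hN0]
    simp
  · have hNw : 0 < N w := hNpos w hw
    set y := (N w)⁻¹ • w with hy
    have hNy : N y ≤ 1 := by
      rw [hy, hNsmul, abs_of_pos (inv_pos.mpr hNw), inv_mul_cancel₀ hNw.ne']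
    have hmem : ⟪a, y⟫_ℝ ∈ {r : ℝ | ∃ x, N x ≤ 1 ∧ r = ⟪a, x⟫_ℝ} := ⟨y, hNy, rfl⟩
    have h1 : ⟪a, y⟫_ℝ ≤ Nd a := by
      rw [hNd]; exact le_csSup (hbdd a) hmem
    have h2 : ⟪a, y⟫_ℝ = (N w)⁻¹ * ⟪a, w⟫_ℝ := by
      rw [hy, real_inner_smul_right]
    rw [h2] at h1
    calc ⟪a, w⟫_ℝ = N w * ((N w)⁻¹ * ⟪a, w⟫_ℝ) := by field_simp
      _ ≤ N w * Nd a := mul_le_mul_of_nonneg_left h1 hNw.le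
      _ = Nd a * N w := mul_comm _ _


/-- Predictive OMD regret bound. With `φ : D → ℝ≥0` differentiable and
1-strongly convex w.r.t. a norm `N` (dual norm `Nd`) on a closed convex `D ⊆ ℝⁿ`, `η > 0`,
`z⁰ ∈ D`, `xᵗ = argmin_{x∈D} ⟨mᵗ, x⟩ + (1/η)D(x‖zᵗ⁻¹)`, and
`zᵗ = argmin_{z∈D} ⟨ℓᵗ, z⟩ + (1/η)D(z‖zᵗ⁻¹)`, where `D(·‖·)` is the Bregman divergence of
`φ`, for all `x̂ ∈ D` and `T`:
`Σₜ₌₁ᵀ ⟨ℓᵗ, xᵗ − x̂⟩ ≤ D(x̂‖z⁰)/η + η Σₜ₌₁ᵀ ‖ℓᵗ−mᵗ‖*² − (1/(8η)) Σₜ₌₁^{T−1} ‖xᵗ⁺¹−xᵗ‖²`. -/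
theorem stmt_14 {n : ℕ} (D : Set (EuclideanSpace ℝ (Fin n)))
    (hDc : IsClosed D) (hDconv : Convex ℝ D)
    (N Nd : EuclideanSpace ℝ (Fin n) → ℝ)
    (hNadd : ∀ x y, N (x + y) ≤ N x + N y)
    (hNsmul : ∀ (c : ℝ) (x), N (c • x) = |c| * N x)
    (hNpos : ∀ x, x ≠ 0 → 0 < N x)
    (hNd : ∀ a, Nd a = sSup {r : ℝ | ∃ x, N x ≤ 1 ∧ r = ⟪a, x⟫_ℝ})
    (φ : EuclideanSpace ℝ (Fin n) → ℝ) (hφ0 : ∀ x ∈ D, 0 ≤ φ x)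
    (gφ : EuclideanSpace ℝ (Fin n) → EuclideanSpace ℝ (Fin n))
    (hdiff : ∀ x ∈ D, HasGradientAt φ (gφ x) x)
    (hstrong : ∀ x ∈ D, ∀ y ∈ D, φ x + ⟪gφ x, y - x⟫_ℝ + 1 / 2 * (N (y - x)) ^ 2 ≤ φ y)
    (Breg : EuclideanSpace ℝ (Fin n) → EuclideanSpace ℝ (Fin n) → ℝ)
    (hBreg : ∀ x c, Breg x c = φ x - φ c - ⟪gφ c, x - c⟫_ℝ)
    (η : ℝ) (hη : 0 < η)
    (ℓ m x z : ℕ → EuclideanSpace ℝ (Fin n))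
    (hz0 : z 0 ∈ D)
    (hx : ∀ t : ℕ, 1 ≤ t → x t ∈ D ∧
      IsMinOn (fun y => ⟪m t, y⟫_ℝ + 1 / η * Breg y (z (t - 1))) D (x t))
    (hz : ∀ t : ℕ, 1 ≤ t → z t ∈ D ∧
      IsMinOn (fun y => ⟪ℓ t, y⟫_ℝ + 1 / η * Breg y (z (t - 1))) D (z t)) :
    ∀ xhat ∈ D, ∀ T : ℕ,
      ∑ t ∈ Finset.Icc 1 T, ⟪ℓ t, x t - xhat⟫_ℝ ≤
        Breg xhat (z 0) / η + η * ∑ t ∈ Finset.Icc 1 T, (Nd (ℓ t - m t)) ^ 2 -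
          1 / (8 * η) * ∑ t ∈ Finset.Icc 1 (T - 1), (N (x (t + 1) - x t)) ^ 2 := by

  intro xhat hxhat T
  have hN0 : N 0 = 0 := by simpa using hNsmul 0 0
  have hNneg : ∀ v : EuclideanSpace ℝ (Fin n), N (-v) = N v := fun v => by
    simpa using hNsmul (-1) v
  have hNnonneg : ∀ v : EuclideanSpace ℝ (Fin n), 0 ≤ N v := by
    intro v
    have h := hNadd v (-v)
    rw [show v + -v = 0 by abel, hN0, hNneg] at h
    linarith
  have hdual := aux_dual N Nd hNadd hNsmul hNpos hNd
  have hzD : ∀ s : ℕ, z s ∈ D := by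
    intro s
    cases s with
    | zero => exact hz0
    | succ k => exact (hz (k+1) (by omega)).1
  have hBregnn : ∀ a, a ∈ D → ∀ b, b ∈ D → 1/2 * (N (a - b))^2 ≤ Breg a b := by
    intro a ha b hb
    have h := hstrong b hb a ha
    rw [hBreg]
    linarith
  -- per-step inequality (multiplied through by η)
  have key : ∀ t : ℕ, 1 ≤ t →
      η * ⟪ℓ t, x t - xhat⟫_ℝ ≤
        (Breg xhat (z (t-1)) - Breg xhat (z t)) + η^2 * (Nd (ℓ t - m t))^2
          - 1/4 * (N (x t - z t))^2 - 1/2 * (N (x t - z (t-1)))^2 := by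
    intro t ht
    have hcD : z (t-1) ∈ D := hzD _
    have hxtD : x t ∈ D := (hx t ht).1
    have hztD : z t ∈ D := (hz t ht).1
    have hminx : IsMinOn (fun y => ⟪m t, y⟫_ℝ +
        1 / η * (φ y - φ (z (t-1)) - ⟪gφ (z (t-1)), y - z (t-1)⟫_ℝ)) D (x t) := by
      have h := (hx t ht).2
      simp only [hBreg] at h
      exact h
    have hminz : IsMinOn (fun y => ⟪ℓ t, y⟫_ℝ +
        1 / η * (φ y - φ (z (t-1)) - ⟪gφ (z (t-1)), y - z (t-1)⟫_ℝ)) D (z t) := by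
      have h := (hz t ht).2
      simp only [hBreg] at h
      exact h
    have A1 := aux_opt hDconv (hdiff _ hxtD) hη hminx hxtD hztD
    have A2 := aux_opt hDconv (hdiff _ hztD) hη hminz hztD hxhat
    have A1' : 0 ≤ η * ⟪m t, z t - x t⟫_ℝ +
        ⟪gφ (x t) - gφ (z (t-1)), z t - x t⟫_ℝ := by
      have h := mul_nonneg hη.le A1
      have e : η * (⟪m t, z t - x t⟫_ℝ +
          1 / η * ⟪gφ (x t) - gφ (z (t-1)), z t - x t⟫_ℝ)
          = η * ⟪m t, z t - x t⟫_ℝ + ⟪gφ (x t) - gφ (z (t-1)), z t - x t⟫_ℝ := by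
        field_simp
      rw [e] at h
      exact h
    have A2' : 0 ≤ η * ⟪ℓ t, xhat - z t⟫_ℝ +
        ⟪gφ (z t) - gφ (z (t-1)), xhat - z t⟫_ℝ := by
      have h := mul_nonneg hη.le A2
      have e : η * (⟪ℓ t, xhat - z t⟫_ℝ +
          1 / η * ⟪gφ (z t) - gφ (z (t-1)), xhat - z t⟫_ℝ)
          = η * ⟪ℓ t, xhat - z t⟫_ℝ + ⟪gφ (z t) - gφ (z (t-1)), xhat - z t⟫_ℝ := by
        field_simp
      rw [e] at h
      exact h
    have T1 : ⟪gφ (x t) - gφ (z (t-1)), z t - x t⟫_ℝ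
        = Breg (z t) (z (t-1)) - Breg (z t) (x t) - Breg (x t) (z (t-1)) := by
      simp only [hBreg, inner_sub_left, inner_sub_right]
      ring
    have T2 : ⟪gφ (z t) - gφ (z (t-1)), xhat - z t⟫_ℝ
        = Breg xhat (z (t-1)) - Breg xhat (z t) - Breg (z t) (z (t-1)) := by
      simp only [hBreg, inner_sub_left, inner_sub_right]
      ring
    rw [T1] at A1'
    rw [T2] at A2'
    have S1 : 1/2 * (N (x t - z t))^2 ≤ Breg (z t) (x t) := by
      have h := hBregnn _ hztD _ hxtD
      rwa [show z t - x t = -(x t - z t) by abel, hNneg] at h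
    have S2 : 1/2 * (N (x t - z (t-1)))^2 ≤ Breg (x t) (z (t-1)) := hBregnn _ hxtD _ hcD
    have F : η * ⟪ℓ t - m t, x t - z t⟫_ℝ
        ≤ η^2 * (Nd (ℓ t - m t))^2 + 1/4 * (N (x t - z t))^2 := by
      have h1 := hdual (ℓ t - m t) (x t - z t)
      nlinarith [mul_le_mul_of_nonneg_left h1 hη.le,
        sq_nonneg (2 * η * Nd (ℓ t - m t) - N (x t - z t))]
    have expand : η * ⟪ℓ t, x t - xhat⟫_ℝ
        = η * ⟪ℓ t - m t, x t - z t⟫_ℝ + η * ⟪m t, x t - z t⟫_ℝ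
          + η * ⟪ℓ t, z t - xhat⟫_ℝ := by
      simp only [inner_sub_left, inner_sub_right]
      ring
    have f1 : η * ⟪m t, z t - x t⟫_ℝ = -(η * ⟪m t, x t - z t⟫_ℝ) := by
      rw [show z t - x t = -(x t - z t) by abel, inner_neg_right]
      ring
    have f2 : η * ⟪ℓ t, xhat - z t⟫_ℝ = -(η * ⟪ℓ t, z t - xhat⟫_ℝ) := by
      rw [show xhat - z t = -(z t - xhat) by abel, inner_neg_right]
      ring
    rw [expand]
    linarith [A1', A2', F, S1, S2, f1, f2]
  -- master inequality by induction
  have master : ∀ S : ℕ, η * (∑ t ∈ Finset.Icc 1 S, ⟪ℓ t, x t - xhat⟫_ℝ) ≤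
      (Breg xhat (z 0) - Breg xhat (z S))
        + η^2 * (∑ t ∈ Finset.Icc 1 S, (Nd (ℓ t - m t))^2)
        - ∑ t ∈ Finset.Icc 1 S,
            (1/4 * (N (x t - z t))^2 + 1/2 * (N (x t - z (t-1)))^2) := by
    intro S
    induction S with
    | zero => simp
    | succ S ih =>
      rw [Finset.sum_Icc_succ_top (by omega : 1 ≤ S + 1),
        Finset.sum_Icc_succ_top (by omega : 1 ≤ S + 1),
        Finset.sum_Icc_succ_top (by omega : 1 ≤ S + 1)]
      have hk := key (S+1) (by omega)
      simp only [Nat.add_sub_cancel] at hk ⊢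
      rw [mul_add, mul_add]
      linarith [ih, hk]
  -- movement bound
  have move : 1/8 * (∑ t ∈ Finset.Icc 1 (T-1), (N (x (t+1) - x t))^2) ≤
      ∑ t ∈ Finset.Icc 1 T,
        (1/4 * (N (x t - z t))^2 + 1/2 * (N (x t - z (t-1)))^2) := by
    have hterm : ∀ t : ℕ, 1/8 * (N (x (t+1) - x t))^2
        ≤ 1/4 * (N (x t - z t))^2 + 1/4 * (N (x (t+1) - z t))^2 := by
      intro t
      have htri : N (x (t+1) - x t) ≤ N (x (t+1) - z t) + N (x t - z t) := by
        have h := hNadd (x (t+1) - z t) (z t - x t)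
        rw [show x (t+1) - z t + (z t - x t) = x (t+1) - x t by abel] at h
        rw [show z t - x t = -(x t - z t) by abel, hNneg] at h
        exact h
      nlinarith [hNnonneg (x (t+1) - z t), hNnonneg (x t - z t),
        hNnonneg (x (t+1) - x t), htri,
        sq_nonneg (N (x (t+1) - z t) - N (x t - z t))]
    calc 1/8 * (∑ t ∈ Finset.Icc 1 (T-1), (N (x (t+1) - x t))^2)
        = ∑ t ∈ Finset.Icc 1 (T-1), 1/8 * (N (x (t+1) - x t))^2 := Finset.mul_sum _ _ _
      _ ≤ ∑ t ∈ Finset.Icc 1 (T-1),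
            (1/4 * (N (x t - z t))^2 + 1/4 * (N (x (t+1) - z t))^2) :=
          Finset.sum_le_sum (fun t _ => hterm t)
      _ = (∑ t ∈ Finset.Icc 1 (T-1), 1/4 * (N (x t - z t))^2)
          + ∑ t ∈ Finset.Icc 1 (T-1), 1/4 * (N (x (t+1) - z t))^2 :=
          Finset.sum_add_distrib
      _ ≤ (∑ t ∈ Finset.Icc 1 T, 1/4 * (N (x t - z t))^2)
          + ∑ t ∈ Finset.Icc 1 T, 1/2 * (N (x t - z (t-1)))^2 := by
          gcongr ?_ + ?_
          · apply Finset.sum_le_sum_of_subset_of_nonneg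
            · exact Finset.Icc_subset_Icc_right (by omega)
            · intro i _ _
              positivity
          · have hmap : Finset.Icc 2 T
                = Finset.map (addRightEmbedding 1) (Finset.Icc 1 (T-1)) := by
              rw [Finset.map_add_right_Icc]
              ext a
              simp only [Finset.mem_Icc]
              omega
            have e1 : ∑ t ∈ Finset.Icc 1 (T-1), 1/4 * (N (x (t+1) - z t))^2
                = ∑ s ∈ Finset.Icc 2 T, 1/4 * (N (x s - z (s-1)))^2 := by
              rw [hmap, Finset.sum_map]
              apply Finset.sum_congr rfl
              intro t _
              simp [addRightEmbedding_apply]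
            rw [e1]
            calc ∑ s ∈ Finset.Icc 2 T, 1/4 * (N (x s - z (s-1)))^2
                ≤ ∑ s ∈ Finset.Icc 2 T, 1/2 * (N (x s - z (s-1)))^2 := by
                  apply Finset.sum_le_sum
                  intro i _
                  nlinarith [sq_nonneg (N (x i - z (i-1)))]
              _ ≤ ∑ s ∈ Finset.Icc 1 T, 1/2 * (N (x s - z (s-1)))^2 := by
                  apply Finset.sum_le_sum_of_subset_of_nonneg
                  · exact Finset.Icc_subset_Icc_left (by omega)
                  · intro i _ _
                    positivity
      _ = ∑ t ∈ Finset.Icc 1 T,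
            (1/4 * (N (x t - z t))^2 + 1/2 * (N (x t - z (t-1)))^2) :=
          Finset.sum_add_distrib.symm
  have hBT : 0 ≤ Breg xhat (z T) := by
    have h := hBregnn xhat hxhat (z T) (hzD T)
    nlinarith [sq_nonneg (N (xhat - z T))]
  have final : η * (∑ t ∈ Finset.Icc 1 T, ⟪ℓ t, x t - xhat⟫_ℝ) ≤
      Breg xhat (z 0)
        + η^2 * (∑ t ∈ Finset.Icc 1 T, (Nd (ℓ t - m t))^2)
        - 1/8 * (∑ t ∈ Finset.Icc 1 (T-1), (N (x (t+1) - x t))^2) := by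
    linarith [master T, move, hBT]
  have heq : Breg xhat (z 0) / η + η * ∑ t ∈ Finset.Icc 1 T, (Nd (ℓ t - m t))^2 -
      1 / (8 * η) * ∑ t ∈ Finset.Icc 1 (T - 1), (N (x (t + 1) - x t))^2
      = (Breg xhat (z 0)
        + η^2 * (∑ t ∈ Finset.Icc 1 T, (Nd (ℓ t - m t))^2)
        - 1/8 * (∑ t ∈ Finset.Icc 1 (T-1), (N (x (t+1) - x t))^2)) / η := by
    field_simp
  rw [heq, le_div_iff₀ hη]
  linarith [final]
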